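/- Let q = 2^h with h ≥ 2, and let a₁₃ ∈ F_q^*, a₁₁ ∈ F_q with Tr(a₁₁) = 1, a₃₃ = a₁₃². Let C = {(x, y) ∈ F_q² : a₁₁x² + a₁₃x + y + a₃₃ = 0} and Δ = {(x, a·x²) : x ∈ F_q^*, Tr(a) = 0}. Then Δ ∩ C = ∅. -/

import Mathlib

theorem stmt12 {F : Type*} [Field F] [Fintype F] [Algebra (ZMod 2) F]
    {h : ℕ} (hh : 2 ≤ h) (hcard : Fintype.card F = 2 ^ h)
    (a11 a13 a33 : F) (h13 : a13 ≠ 0) (htr : Algebra.trace (ZMod 2) F a11 = 1)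
    (h33 : a33 = a13 ^ 2) :
    {p : F × F | ∃ x a : F, x ≠ 0 ∧ Algebra.trace (ZMod 2) F a = 0 ∧
        p = (x, a * x ^ 2)} ∩
      {p : F × F | a11 * p.1 ^ 2 + a13 * p.1 + p.2 + a33 = 0} = ∅ := by
  haveI : CharP F 2 := charP_of_injective_algebraMap' (ZMod 2) (A := F) 2
  -- Frobenius as a ZMod 2 algebra automorphism
  let e : F ≃ₐ[ZMod 2] F := AlgEquiv.ofRingEquiv (f := frobeniusEquiv F 2)
    (fun x => by
      have hx : x ^ 2 = x := by revert x; decide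
      simp only [frobeniusEquiv_apply, frobenius_def, ← map_pow, hx])
  have key : ∀ t : F, Algebra.trace (ZMod 2) F (t ^ 2) = Algebra.trace (ZMod 2) F t := by
    intro t
    have := Algebra.trace_eq_of_algEquiv e t
    simpa [e, AlgEquiv.ofRingEquiv, frobeniusEquiv_def, frobenius_def] using this
  ext p
  simp only [Set.mem_inter_iff, Set.mem_setOf_eq, Set.mem_empty_iff_false, iff_false]
  rintro ⟨⟨x, a, hx, ha, rfl⟩, hC⟩
  simp only at hC
  have h2 : (2 : F) = 0 := by
    have := CharP.cast_eq_zero F 2; exact_mod_cast this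
  -- From the equation, a = a11 + a13 * x⁻¹ + (a13 * x⁻¹)^2
  have hxne : x ^ 2 ≠ 0 := pow_ne_zero 2 hx
  rw [h33] at hC
  have h1 : a * x ^ 2 = a11 * x ^ 2 + a13 * x + a13 ^ 2 := by
    linear_combination hC - (a11 * x ^ 2 + a13 * x + a13 ^ 2) * h2
  have hEq : a = a11 + a13 * x⁻¹ + (a13 * x⁻¹) ^ 2 := by
    field_simp
    linear_combination h1
  have hfin : Algebra.trace (ZMod 2) F a = 1 := by
    rw [hEq, map_add, map_add, key, htr, add_assoc, CharTwo.add_self_eq_zero, add_zero]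
  rw [ha] at hfin
  exact zero_ne_one hfin
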